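/- Assume Q ⪯ 0. Suppose there exist a matrix 𝒢 ∈ ℝ^{N×(n+m)} with [X; U]·𝒢 = I_{n+m}, a symmetric positive definite P ∈ ℝ^{n×n}, and a scalar τ > 0 such that Fᵀ Θ F ≺ 0 (negative definite), where F ∈ ℝ^{(2n+m+p+m_w+N)×(n+m+m_w)} is the block matrix with row blocks [I_n, 0, 0], [X₊𝒢 (as an n×(n+m) block), −B_w], [0, I_m, 0], [C, D, 0], [0, 0, I_{m_w}], [𝒢 (as an N×(n+m) block), 0], and Θ is the block-diagonal matrix diag( [[−P, 0],[0, P]], [[−R, −Sᵀ],[−S, −Q]], τ·[[Q_w, S_w],[S_wᵀ, R_w]] ) matching these row blocks. Then every (A_d, B_d) ∈ Σ_{X,U} is such that the system x_{k+1} = A_d x_k + B_d u_k, y_k = C x_k + D u_k is (Q,S,R)-dissipative. -/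

import Mathlib

open Matrix

/-- `M ≺ 0`: a real matrix is negative definite iff `-M` is positive definite. -/
def Matrix.NegDef {k : Type*} [Fintype k] (M : Matrix k k ℝ) : Prop :=
  (-M).PosDef

/-- `M ⪯ 0`: a real matrix is negative semidefinite iff `-M` is positive semidefinite. -/
def Matrix.NegSemidef {k : Type*} [Fintype k] (M : Matrix k k ℝ) : Prop :=
  (-M).PosSemidef

/-- Quadratic supply rate `s(u,y) = uᵀRu + uᵀSᵀy + yᵀSu + yᵀQy`. -/
noncomputable def supplyRate {m p : ℕ} (R : Matrix (Fin m) (Fin m) ℝ)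
    (S : Matrix (Fin p) (Fin m) ℝ) (Q : Matrix (Fin p) (Fin p) ℝ)
    (u : Fin m → ℝ) (y : Fin p → ℝ) : ℝ :=
  u ⬝ᵥ R.mulVec u + u ⬝ᵥ Sᵀ.mulVec y + y ⬝ᵥ S.mulVec u + y ⬝ᵥ Q.mulVec y

/-- Membership in the noise set `𝒲`. -/
def inNoiseSet {mw N : ℕ} (Qw : Matrix (Fin mw) (Fin mw) ℝ)
    (Sw : Matrix (Fin mw) (Fin N) ℝ) (Rw : Matrix (Fin N) (Fin N) ℝ)
    (W : Matrix (Fin mw) (Fin N) ℝ) : Prop :=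
  (Wᵀ * Qw * W + Wᵀ * Sw + Swᵀ * W + Rw).PosSemidef

/-- Membership `(A_d, B_d) ∈ Σ_{X,U}`. -/
def inConsistentSet {n m mw N : ℕ}
    (X Xp : Matrix (Fin n) (Fin N) ℝ) (U : Matrix (Fin m) (Fin N) ℝ)
    (Bw : Matrix (Fin n) (Fin mw) ℝ)
    (Qw : Matrix (Fin mw) (Fin mw) ℝ) (Sw : Matrix (Fin mw) (Fin N) ℝ)
    (Rw : Matrix (Fin N) (Fin N) ℝ)
    (Ad : Matrix (Fin n) (Fin n) ℝ) (Bd : Matrix (Fin n) (Fin m) ℝ) : Prop :=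
  ∃ W : Matrix (Fin mw) (Fin N) ℝ,
    inNoiseSet Qw Sw Rw W ∧ Xp = Ad * X + Bd * U + Bw * W

/-- The outer factor `F` of the robust-performance LMI, with row blocks
`[I 0 0]`, `[X₊𝒢 −B_w]`, `[0 I 0]`, `[C D 0]`, `[0 0 I]`, `[𝒢 0]`. -/
noncomputable def outerFactor {n m p mw N : ℕ}
    (C : Matrix (Fin p) (Fin n) ℝ) (D : Matrix (Fin p) (Fin m) ℝ)
    (Xp : Matrix (Fin n) (Fin N) ℝ) (Bw : Matrix (Fin n) (Fin mw) ℝ)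
    (G : Matrix (Fin N) (Fin n ⊕ Fin m) ℝ) :
    Matrix ((Fin n ⊕ Fin n) ⊕ ((Fin m ⊕ Fin p) ⊕ (Fin mw ⊕ Fin N)))
      ((Fin n ⊕ Fin m) ⊕ Fin mw) ℝ :=
  Matrix.fromRows
    (Matrix.fromRows
      (Matrix.fromCols
        (Matrix.fromCols (1 : Matrix (Fin n) (Fin n) ℝ)
          (0 : Matrix (Fin n) (Fin m) ℝ)) (0 : Matrix (Fin n) (Fin mw) ℝ))
      (Matrix.fromCols (Xp * G) (-Bw)))
    (Matrix.fromRows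
      (Matrix.fromRows
        (Matrix.fromCols
          (Matrix.fromCols (0 : Matrix (Fin m) (Fin n) ℝ)
            (1 : Matrix (Fin m) (Fin m) ℝ)) (0 : Matrix (Fin m) (Fin mw) ℝ))
        (Matrix.fromCols (Matrix.fromCols C D)
          (0 : Matrix (Fin p) (Fin mw) ℝ)))
      (Matrix.fromRows
        (Matrix.fromCols (0 : Matrix (Fin mw) (Fin n ⊕ Fin m) ℝ)
          (1 : Matrix (Fin mw) (Fin mw) ℝ))
        (Matrix.fromCols G (0 : Matrix (Fin N) (Fin mw) ℝ))))

/-- The inner block-diagonal matrix `Θ` of the robust-performance LMI: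
`diag([[−P,0],[0,P]], [[−R,−Sᵀ],[−S,−Q]], τ·[[Q_w,S_w],[S_wᵀ,R_w]])`. -/
noncomputable def innerMatrix {n m p mw N : ℕ}
    (P : Matrix (Fin n) (Fin n) ℝ)
    (R : Matrix (Fin m) (Fin m) ℝ) (S : Matrix (Fin p) (Fin m) ℝ)
    (Q : Matrix (Fin p) (Fin p) ℝ)
    (Qw : Matrix (Fin mw) (Fin mw) ℝ) (Sw : Matrix (Fin mw) (Fin N) ℝ)
    (Rw : Matrix (Fin N) (Fin N) ℝ) (τ : ℝ) :
    Matrix ((Fin n ⊕ Fin n) ⊕ ((Fin m ⊕ Fin p) ⊕ (Fin mw ⊕ Fin N)))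
      ((Fin n ⊕ Fin n) ⊕ ((Fin m ⊕ Fin p) ⊕ (Fin mw ⊕ Fin N))) ℝ :=
  Matrix.fromBlocks (Matrix.fromBlocks (-P) 0 0 P) 0 0
    (Matrix.fromBlocks (Matrix.fromBlocks (-R) (-Sᵀ) (-S) (-Q)) 0 0
      (τ • Matrix.fromBlocks Qw Sw Swᵀ Rw))

lemma negdef_quad_nonpos {k : Type*} [Fintype k] {M : Matrix k k ℝ}
    (hM : M.NegDef) (v : k → ℝ) : v ⬝ᵥ M.mulVec v ≤ 0 := by
  have h := hM.posSemidef.dotProduct_mulVec_nonneg v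
  simp only [star_trivial, Matrix.neg_mulVec, dotProduct_neg] at h
  linarith

lemma dot_transpose_mulVec {a b : Type*} [Fintype a] [Fintype b]
    (W : Matrix a b ℝ) (g : b → ℝ) (v : a → ℝ) :
    g ⬝ᵥ Wᵀ.mulVec v = (W.mulVec g) ⬝ᵥ v := by
  rw [Matrix.dotProduct_mulVec, Matrix.vecMul_transpose]

lemma step_ineq {n m p mw N : ℕ}
    (C : Matrix (Fin p) (Fin n) ℝ) (D : Matrix (Fin p) (Fin m) ℝ)
    (R : Matrix (Fin m) (Fin m) ℝ) (S : Matrix (Fin p) (Fin m) ℝ)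
    (Q : Matrix (Fin p) (Fin p) ℝ)
    (X Xp : Matrix (Fin n) (Fin N) ℝ) (U : Matrix (Fin m) (Fin N) ℝ)
    (Bw : Matrix (Fin n) (Fin mw) ℝ)
    (Qw : Matrix (Fin mw) (Fin mw) ℝ) (Sw : Matrix (Fin mw) (Fin N) ℝ)
    (Rw : Matrix (Fin N) (Fin N) ℝ)
    (G : Matrix (Fin N) (Fin n ⊕ Fin m) ℝ)
    (hG : Matrix.fromRows X U * G = 1)
    (P : Matrix (Fin n) (Fin n) ℝ)
    (τ : ℝ) (hτ : 0 < τ)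
    (hLMI : ((outerFactor C D Xp Bw G)ᵀ * innerMatrix P R S Q Qw Sw Rw τ
        * outerFactor C D Xp Bw G).NegDef)
    (Ad : Matrix (Fin n) (Fin n) ℝ) (Bd : Matrix (Fin n) (Fin m) ℝ)
    (W : Matrix (Fin mw) (Fin N) ℝ) (hW : inNoiseSet Qw Sw Rw W)
    (hXp : Xp = Ad * X + Bd * U + Bw * W)
    (x : Fin n → ℝ) (u : Fin m → ℝ) :
    (Ad.mulVec x + Bd.mulVec u) ⬝ᵥ P.mulVec (Ad.mulVec x + Bd.mulVec u)
      - x ⬝ᵥ P.mulVec x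
      ≤ supplyRate R S Q u (C.mulVec x + D.mulVec u) := by
  have hXpG : Xp * G = Matrix.fromCols Ad Bd + Bw * W * G := by
    rw [hXp, ← Matrix.fromCols_mul_fromRows, Matrix.add_mul, Matrix.mul_assoc,
      hG, Matrix.mul_one]
  set z : (Fin n ⊕ Fin m) → ℝ := Sum.elim x u with hz
  set g : Fin N → ℝ := G.mulVec z with hg
  set w : Fin mw → ℝ := W.mulVec g with hw
  set xp : Fin n → ℝ := Ad.mulVec x + Bd.mulVec u with hxp
  set y : Fin p → ℝ := C.mulVec x + D.mulVec u with hy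
  set ξ : ((Fin n ⊕ Fin m) ⊕ Fin mw) → ℝ := Sum.elim z w with hξ
  have hBwW : (Bw * W * G).mulVec z = Bw.mulVec w := by
    rw [hw, hg, Matrix.mulVec_mulVec, Matrix.mulVec_mulVec]
  -- compute F *ᵥ ξ
  have hF : (outerFactor C D Xp Bw G).mulVec ξ
      = Sum.elim (Sum.elim x xp)
          (Sum.elim (Sum.elim u y) (Sum.elim w g)) := by
    unfold outerFactor
    rw [hξ]
    simp only [Matrix.fromRows_mulVec, Matrix.fromCols_mulVec_sumElim,
      Matrix.zero_mulVec, add_zero, zero_add, Matrix.one_mulVec,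
      Matrix.neg_mulVec, hXpG, Matrix.add_mulVec, ← hz, hBwW,
      add_neg_cancel_right, ← hg, ← hxp, ← hy]
    rw [hz]
    simp only [Matrix.fromCols_mulVec_sumElim, Matrix.one_mulVec,
      Matrix.zero_mulVec, add_zero, zero_add, ← hxp, ← hy]
  -- quadratic form identity
  have hquad : ξ ⬝ᵥ ((outerFactor C D Xp Bw G)ᵀ * innerMatrix P R S Q Qw Sw Rw τ
        * outerFactor C D Xp Bw G).mulVec ξ
      = ((outerFactor C D Xp Bw G).mulVec ξ) ⬝ᵥ
          (innerMatrix P R S Q Qw Sw Rw τ).mulVec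
            ((outerFactor C D Xp Bw G).mulVec ξ) := by
    rw [Matrix.mul_assoc, ← Matrix.mulVec_mulVec, dot_transpose_mulVec,
      ← Matrix.mulVec_mulVec]
  -- expand the inner quadratic form
  have hexp : ((outerFactor C D Xp Bw G).mulVec ξ) ⬝ᵥ
          (innerMatrix P R S Q Qw Sw Rw τ).mulVec
            ((outerFactor C D Xp Bw G).mulVec ξ)
      = (x ⬝ᵥ (-P).mulVec x + xp ⬝ᵥ P.mulVec xp)
        + ((u ⬝ᵥ (-R).mulVec u + u ⬝ᵥ (-Sᵀ).mulVec y)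
            + (y ⬝ᵥ (-S).mulVec u + y ⬝ᵥ (-Q).mulVec y))
        + τ * ((w ⬝ᵥ Qw.mulVec w + w ⬝ᵥ Sw.mulVec g)
            + (g ⬝ᵥ Swᵀ.mulVec w + g ⬝ᵥ Rw.mulVec g)) := by
    rw [hF]
    unfold innerMatrix
    simp only [Matrix.fromBlocks_mulVec, Sum.elim_comp_inl, Sum.elim_comp_inr,
      Matrix.zero_mulVec, add_zero, zero_add,
      sumElim_dotProduct_sumElim, Matrix.smul_mulVec,
      dotProduct_smul, smul_eq_mul, dotProduct_add]
    ring
  -- noise quadratic form is nonneg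
  have hnoise : 0 ≤ (w ⬝ᵥ Qw.mulVec w + w ⬝ᵥ Sw.mulVec g)
      + (g ⬝ᵥ Swᵀ.mulVec w + g ⬝ᵥ Rw.mulVec g) := by
    have h := hW.dotProduct_mulVec_nonneg g
    simp only [star_trivial, Matrix.add_mulVec, dotProduct_add] at h
    have e1 : g ⬝ᵥ (Wᵀ * Qw * W).mulVec g = w ⬝ᵥ Qw.mulVec w := by
      rw [hw, Matrix.mul_assoc, ← Matrix.mulVec_mulVec, dot_transpose_mulVec,
        ← Matrix.mulVec_mulVec]
    have e2 : g ⬝ᵥ (Wᵀ * Sw).mulVec g = w ⬝ᵥ Sw.mulVec g := by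
      rw [hw, ← Matrix.mulVec_mulVec, dot_transpose_mulVec]
    have e3 : g ⬝ᵥ (Swᵀ * W).mulVec g = g ⬝ᵥ Swᵀ.mulVec w := by
      rw [hw, ← Matrix.mulVec_mulVec]
    rw [e1, e2, e3] at h
    linarith
  have hneg := negdef_quad_nonpos hLMI ξ
  rw [hquad, hexp] at hneg
  have hτq : 0 ≤ τ * ((w ⬝ᵥ Qw.mulVec w + w ⬝ᵥ Sw.mulVec g)
      + (g ⬝ᵥ Swᵀ.mulVec w + g ⬝ᵥ Rw.mulVec g)) := mul_nonneg hτ.le hnoise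
  simp only [Matrix.neg_mulVec, dotProduct_neg] at hneg
  unfold supplyRate
  linarith

theorem robust_lmi_implies_robust_dissipativity {n m p mw N : ℕ}
    (C : Matrix (Fin p) (Fin n) ℝ) (D : Matrix (Fin p) (Fin m) ℝ)
    (R : Matrix (Fin m) (Fin m) ℝ) (S : Matrix (Fin p) (Fin m) ℝ)
    (Q : Matrix (Fin p) (Fin p) ℝ) (hR : R.IsSymm) (hQ : Q.IsSymm)
    (hQneg : Q.NegSemidef)
    (X Xp : Matrix (Fin n) (Fin N) ℝ) (U : Matrix (Fin m) (Fin N) ℝ)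
    (Bw : Matrix (Fin n) (Fin mw) ℝ)
    (Qw : Matrix (Fin mw) (Fin mw) ℝ) (Sw : Matrix (Fin mw) (Fin N) ℝ)
    (Rw : Matrix (Fin N) (Fin N) ℝ) (hQw : Qw.IsSymm) (hRw : Rw.PosDef)
    (G : Matrix (Fin N) (Fin n ⊕ Fin m) ℝ)
    (hG : Matrix.fromRows X U * G = 1)
    (P : Matrix (Fin n) (Fin n) ℝ) (hP : P.PosDef)
    (τ : ℝ) (hτ : 0 < τ)
    (hLMI : ((outerFactor C D Xp Bw G)ᵀ * innerMatrix P R S Q Qw Sw Rw τ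
        * outerFactor C D Xp Bw G).NegDef) :
    ∀ (Ad : Matrix (Fin n) (Fin n) ℝ) (Bd : Matrix (Fin n) (Fin m) ℝ),
      inConsistentSet X Xp U Bw Qw Sw Rw Ad Bd →
      ∃ V : (Fin n → ℝ) → ℝ,
        ∀ (u : ℕ → Fin m → ℝ) (x : ℕ → Fin n → ℝ),
          (∀ k : ℕ, x (k + 1) = Ad.mulVec (x k) + Bd.mulVec (u k)) →
          ∀ k₂ k₁ : ℕ, k₂ < k₁ →
            V (x k₁) - V (x k₂)
              ≤ ∑ i ∈ Finset.Ico k₂ k₁,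
                  supplyRate R S Q (u i) (C.mulVec (x i) + D.mulVec (u i)) := by
  rintro Ad Bd ⟨W, hW, hXp⟩
  refine ⟨fun v => v ⬝ᵥ P.mulVec v, ?_⟩
  intro u x hdyn k₂ k₁ hk
  have step : ∀ k : ℕ,
      x (k + 1) ⬝ᵥ P.mulVec (x (k + 1)) - x k ⬝ᵥ P.mulVec (x k)
        ≤ supplyRate R S Q (u k) (C.mulVec (x k) + D.mulVec (u k)) := by
    intro k
    rw [hdyn k]
    exact step_ineq C D R S Q X Xp U Bw Qw Sw Rw G hG P τ hτ hLMI Ad Bd W hW hXp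
      (x k) (u k)
  have key : ∀ d : ℕ,
      x (k₂ + d) ⬝ᵥ P.mulVec (x (k₂ + d)) - x k₂ ⬝ᵥ P.mulVec (x k₂)
        ≤ ∑ i ∈ Finset.Ico k₂ (k₂ + d),
            supplyRate R S Q (u i) (C.mulVec (x i) + D.mulVec (u i)) := by
    intro d
    induction d with
    | zero => simp
    | succ d ih =>
      have hle : k₂ ≤ k₂ + d := Nat.le_add_right _ _
      rw [← Nat.add_assoc, Finset.sum_Ico_succ_top hle]
      have := step (k₂ + d)
      linarith
  have := key (k₁ - k₂)
  rwa [Nat.add_sub_cancel' hk.le] at this
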